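/- Let (X, *, f) be an f-quandle, A an abelian group, and for n ≥ 1 let C^n(X, A) be the abelian group of functions X^n → A. Define δ^n : C^n(X, A) → C^{n+1}(X, A) by (δ^n φ)(x_1, …, x_{n+1}) = Σ_{i=2}^{n+1} (−1)^i [ φ(x_1, …, x_{i−1}, x_{i+1}, …, x_{n+1}) − φ(x_1 * x_i, x_2 * x_i, …, x_{i−1} * x_i, f(x_{i+1}), …, f(x_{n+1})) ]. Then δ^{n+1} ∘ δ^n = 0 for all n ≥ 1, so (C^•(X, A), δ^•) is a cochain complex. -/

import Mathlib

private lemma sAv {m : ℕ} (i : Fin (m+1)) (k : Fin m) :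
    ((i.succAbove k : Fin (m+1)) : ℕ) = if (k:ℕ) < (i:ℕ) then (k:ℕ) else (k:ℕ)+1 := by
  rw [Fin.succAbove]
  split_ifs with h h2 h3
  · simp
  · exact absurd (by simpa [Fin.lt_def] using h) h2
  · exact absurd (by simpa [Fin.lt_def] using h3) h
  · simp

private lemma sgn1 (a b : ℕ) : ((-1:ℤ)^(a+1)) * ((-1:ℤ)^(b+1)) = (-1:ℤ)^(a+b) := by
  rw [← pow_add, show a+1+(b+1) = (a+b)+2 by omega, pow_add]
  norm_num

@[reducible] private def pred' {m : ℕ} (i : Fin (m+2)) : Fin (m+1) :=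
  ⟨(i:ℕ)-1, by have := i.isLt; omega⟩

section
variable {X : Type*} (op : X → X → X) (f : X → X)

private def Sm {m : ℕ} (i : Fin (m+1)) (x : Fin (m+1) → X) : Fin m → X :=
  fun j => if (j : ℕ) < (i : ℕ) then op (x (Fin.castSucc j)) (x i) else f (x j.succ)

variable {m : ℕ} (x : Fin (m+2) → X) (i : Fin (m+2)) (j : Fin (m+1))

private lemma L1 (hji : (j:ℕ) < (i:ℕ)) :
    j.removeNth (i.removeNth x) = (pred' i).removeNth (j.castSucc.removeNth x) := by
  funext k
  simp only [Fin.removeNth, pred']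
  congr 1
  apply Fin.ext
  simp only [sAv, Fin.coe_castSucc]
  split_ifs <;> omega

private lemma L2 (hji : (j:ℕ) < (i:ℕ)) :
    Sm op f j (i.removeNth x) = (pred' i).removeNth (Sm op f j.castSucc x) := by
  funext k
  simp only [Fin.removeNth, Sm, pred', Fin.coe_castSucc, Fin.val_succ, sAv]
  split_ifs <;>
    first
      | omega
      | (congr <;> (apply Fin.ext; simp only [Fin.coe_castSucc, Fin.val_succ, sAv]) <;>
          ((try split_ifs) <;> omega))

private lemma L3 (hji : (j:ℕ) < (i:ℕ)) :
    j.removeNth (Sm op f i x) = Sm op f (pred' i) (j.castSucc.removeNth x) := by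
  funext k
  simp only [Fin.removeNth, Sm, pred', Fin.coe_castSucc, Fin.val_succ, sAv]
  split_ifs <;>
    first
      | omega
      | (congr <;> (apply Fin.ext; simp only [Fin.coe_castSucc, Fin.val_succ, sAv]) <;>
          ((try split_ifs) <;> omega))

private lemma L4 (h1 : ∀ x y z : X, op (op x y) (f z) = op (op x z) (op y z))
    (hf : ∀ a b : X, f (op a b) = op (f a) (f b)) (hji : (j:ℕ) < (i:ℕ)) :
    Sm op f j (Sm op f i x) = Sm op f (pred' i) (Sm op f j.castSucc x) := by
  funext k
  simp only [Fin.removeNth, Sm, pred', Fin.coe_castSucc, Fin.val_succ, sAv]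
  split_ifs <;>
    first
      | omega
      | ((try rw [hf]); (try rw [← h1]); congr <;>
          (apply Fin.ext; simp only [Fin.coe_castSucc, Fin.val_succ, sAv]) <;>
          ((try split_ifs) <;> omega))

private def Bt {A : Type*} [AddCommGroup A] {n : ℕ} (φ : (Fin n → X) → A)
    (x : Fin (n+2) → X) (i : Fin (n+2)) (j : Fin (n+1)) : A :=
  (φ (j.removeNth (i.removeNth x)) - φ (Sm op f j (i.removeNth x))) -
    (φ (j.removeNth (Sm op f i x)) - φ (Sm op f j (Sm op f i x)))

private lemma Bt_key {A : Type*} [AddCommGroup A] {n : ℕ} (φ : (Fin n → X) → A)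
    (h1 : ∀ x y z : X, op (op x y) (f z) = op (op x z) (op y z))
    (hf : ∀ a b : X, f (op a b) = op (f a) (f b))
    (x : Fin (n+2) → X) (i : Fin (n+2)) (j : Fin (n+1)) (hji : (j:ℕ) < (i:ℕ)) :
    Bt op f φ x i j = Bt op f φ x j.castSucc (pred' i) := by
  unfold Bt
  rw [L1 x i j hji, L2 op f x i j hji, L3 op f x i j hji, L4 op f x i j h1 hf hji]
  abel
end

private def invo (n : ℕ) : Fin (n+2) × Fin (n+1) → Fin (n+2) × Fin (n+1) := fun p =>
  if _h : 1 ≤ (p.1:ℕ) ∧ 1 ≤ (p.2:ℕ) then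
    if _h2 : (p.2:ℕ) < (p.1:ℕ) then
      (⟨(p.2:ℕ), by have := p.2.isLt; omega⟩, ⟨(p.1:ℕ)-1, by have := p.1.isLt; omega⟩)
    else
      (⟨(p.2:ℕ)+1, by have := p.2.isLt; omega⟩, ⟨(p.1:ℕ), by have := p.2.isLt; omega⟩)
  else p

private lemma invo_eq1 {n : ℕ} (p : Fin (n+2) × Fin (n+1))
    (ha : 1 ≤ (p.1:ℕ)) (hb : 1 ≤ (p.2:ℕ)) (hlt : (p.2:ℕ) < (p.1:ℕ)) :
    invo n p = (p.2.castSucc, pred' p.1) := by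
  simp only [invo, dif_pos (And.intro ha hb), dif_pos hlt]
  rfl

private lemma invo_eq2 {n : ℕ} (p : Fin (n+2) × Fin (n+1))
    (ha : 1 ≤ (p.1:ℕ)) (hb : 1 ≤ (p.2:ℕ)) (hle : ¬ (p.2:ℕ) < (p.1:ℕ)) :
    invo n p = (⟨(p.2:ℕ)+1, by have := p.2.isLt; omega⟩,
      ⟨(p.1:ℕ), by have := p.2.isLt; omega⟩) := by
  simp only [invo, dif_pos (And.intro ha hb), dif_neg hle]

private lemma sgn2 (a b : ℕ) (h : a = b + 1 ∨ b = a + 1) :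
    ((-1:ℤ)^a + (-1:ℤ)^b) = 0 := by
  rcases h with h | h <;> subst h <;> rw [pow_succ] <;> ring

/-- The f-quandle differential `δ^n : C^n(X, A) → C^{n+1}(X, A)` (with `η = id`, `τ = 0`):
`(δ^n φ)(x_1, …, x_{n+1}) = Σ_{i=2}^{n+1} (−1)^i [ φ(x_1, …, x̂_i, …, x_{n+1})
  − φ(x_1 * x_i, …, x_{i−1} * x_i, f x_{i+1}, …, f x_{n+1}) ]`
(indices in the formula are 1-based; here tuples are 0-based, so the sum runs over the
indices `i : Fin (n+1)` with `1 ≤ i` and carries the sign `(−1)^{i+1}`). -/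
def fQuandleDelta {X A : Type*} [AddCommGroup A] (op : X → X → X) (f : X → X) (n : ℕ)
    (φ : (Fin n → X) → A) : (Fin (n + 1) → X) → A := fun x =>
  ∑ i : Fin (n + 1),
    if 1 ≤ (i : ℕ) then
      ((-1 : ℤ) ^ ((i : ℕ) + 1)) •
        (φ (i.removeNth x) -
          φ (fun j : Fin n =>
            if (j : ℕ) < (i : ℕ) then op (x (Fin.castSucc j)) (x i) else f (x j.succ)))
    else 0

private lemma expand {X A : Type*} [AddCommGroup A] (op : X → X → X) (f : X → X) (m : ℕ)
    (φ : (Fin m → X) → A) (y : Fin (m+1) → X) :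
    fQuandleDelta op f m φ y =
      ∑ i : Fin (m + 1),
        if 1 ≤ (i : ℕ) then
          ((-1 : ℤ) ^ ((i : ℕ) + 1)) • (φ (i.removeNth y) - φ (Sm op f i y))
        else 0 := rfl

/-- For an f-quandle `(X, *, f)` and an abelian group `A`, the operators
`δ^n` satisfy `δ^{n+1} ∘ δ^n = 0` for all `n ≥ 1`, so `(C^•(X, A), δ^•)` is a cochain
complex. -/
theorem fQuandleDelta_comp_zero
    {X A : Type*} [AddCommGroup A] (op : X → X → X) (f : X → X)
    (h1 : ∀ x y z : X, op (op x y) (f z) = op (op x z) (op y z))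
    (h2 : ∀ x y : X, ∃! z : X, op z y = f x)
    (h3 : ∀ x : X, op x x = f x)
    (n : ℕ) (hn : 1 ≤ n) (φ : (Fin n → X) → A) :
    fQuandleDelta op f (n + 1) (fQuandleDelta op f n φ) = 0 := by
  have hf : ∀ a b : X, f (op a b) = op (f a) (f b) := by
    intro a b
    have h := h1 a a b
    rw [h3, h3] at h
    exact h.symm
  funext x
  show fQuandleDelta op f (n + 1) (fQuandleDelta op f n φ) x = 0
  have step1 : fQuandleDelta op f (n + 1) (fQuandleDelta op f n φ) x =
      ∑ i : Fin (n+2), ∑ j : Fin (n+1),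
        (if 1 ≤ (i:ℕ) ∧ 1 ≤ (j:ℕ) then ((-1:ℤ)^((i:ℕ)+(j:ℕ))) • Bt op f φ x i j else 0) := by
    rw [expand]
    refine Finset.sum_congr rfl fun i _ => ?_
    by_cases hi : 1 ≤ (i:ℕ)
    · rw [if_pos hi, expand, expand, ← Finset.sum_sub_distrib, Finset.smul_sum]
      refine Finset.sum_congr rfl fun j _ => ?_
      by_cases hj : 1 ≤ (j:ℕ)
      · rw [if_pos hj, if_pos hj, if_pos ⟨hi, hj⟩, ← smul_sub, smul_smul, sgn1]
        rfl
      · simp [hj]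
    · simp [hi]
  rw [step1, ← Finset.sum_product', Finset.univ_product_univ]
  apply Finset.sum_ninvolution (invo n)
  · -- pairing
    intro p
    by_cases h : 1 ≤ (p.1:ℕ) ∧ 1 ≤ (p.2:ℕ)
    · obtain ⟨hi1, hj1⟩ := h
      by_cases hlt : (p.2:ℕ) < (p.1:ℕ)
      · rw [invo_eq1 p hi1 hj1 hlt]
        rw [if_pos ⟨hi1, hj1⟩,
          if_pos ⟨by simpa using hj1, by simp only [pred']; (try dsimp only); omega⟩]
        rw [← Bt_key op f φ h1 hf x p.1 p.2 hlt, ← add_smul]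
        convert zero_smul ℤ _ using 2
        apply sgn2
        simp only [pred', Fin.coe_castSucc]
        try dsimp only
        omega
      · rw [invo_eq2 p hi1 hj1 hlt]
        rw [if_pos ⟨hi1, hj1⟩,
          if_pos ⟨by (try dsimp only); omega, by (try dsimp only); omega⟩]
        have key := Bt_key op f φ h1 hf x
          (⟨(p.2:ℕ)+1, by have := p.2.isLt; omega⟩ : Fin (n+2))
          (⟨(p.1:ℕ), by have := p.2.isLt; omega⟩ : Fin (n+1))
          (by (try dsimp only); omega)
        have e1 : ((⟨(p.1:ℕ), by have := p.2.isLt; omega⟩ : Fin (n+1))).castSucc = p.1 :=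
          Fin.ext rfl
        have e2 : pred' (⟨(p.2:ℕ)+1, by have := p.2.isLt; omega⟩ : Fin (n+2)) = p.2 :=
          Fin.ext (by simp only [pred']; (try dsimp only); omega)
        rw [e1, e2] at key
        rw [key, ← add_smul]
        convert zero_smul ℤ _ using 2
        apply sgn2
        try dsimp only
        omega
    · have e : invo n p = p := by simp only [invo, dif_neg h]
      rw [e, if_neg h, add_zero]
  · intro p hne
    by_cases h : 1 ≤ (p.1:ℕ) ∧ 1 ≤ (p.2:ℕ)
    · obtain ⟨hi1, hj1⟩ := h
      by_cases hlt : (p.2:ℕ) < (p.1:ℕ)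
      · rw [invo_eq1 p hi1 hj1 hlt]
        intro heq
        have := congrArg (fun q : Fin (n+2) × Fin (n+1) => ((q.1 : Fin (n+2)) : ℕ)) heq
        simp at this
        omega
      · rw [invo_eq2 p hi1 hj1 hlt]
        intro heq
        have := congrArg (fun q : Fin (n+2) × Fin (n+1) => ((q.1 : Fin (n+2)) : ℕ)) heq
        simp at this
        omega
    · exact absurd (if_neg h) hne
  · intro p; exact Finset.mem_univ _
  · intro p
    by_cases h : 1 ≤ (p.1:ℕ) ∧ 1 ≤ (p.2:ℕ)
    · obtain ⟨hi1, hj1⟩ := h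
      by_cases hlt : (p.2:ℕ) < (p.1:ℕ)
      · rw [invo_eq1 p hi1 hj1 hlt,
          invo_eq2 _ (by simpa using hj1) (by simp [pred']; omega) (by simp [pred']; omega)]
        refine Prod.ext ?_ ?_ <;> apply Fin.ext <;> simp [pred'] <;> omega
      · rw [invo_eq2 p hi1 hj1 hlt,
          invo_eq1 _ (by simp) (by simpa using hi1) (by simp; omega)]
        refine Prod.ext ?_ ?_ <;> apply Fin.ext <;> simp [pred'] <;> omega
    · have e : invo n p = p := by simp only [invo, dif_neg h]
      rw [e, e]
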